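/- Let g_1,…,g_k be a basis of a k-dimensional linear code C ⊆ F_q^n and let z_1, z_2, z_3 ∈ C span a subspace of dimension ≥ 2. Then the span B of {z_i ∗ g_j : 1 ≤ i ≤ 3, 1 ≤ j ≤ k} has dimension at most 3k−3. -/

import Mathlib

open Submodule Polynomial Matrix

lemma pair_swap_li {F V : Type*} [Field F] [AddCommGroup V] [Module F V]
    {x y : V} (h : LinearIndependent F ![x, y]) : LinearIndependent F ![y, x] := by
  rw [LinearIndependent.pair_iff] at h ⊢
  intro s t hst
  obtain ⟨h1, h2⟩ := h t s (by rw [add_comm]; exact hst)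
  exact ⟨h2, h1⟩

lemma cases3_li {F V : Type*} [Field F] [AddCommGroup V] [Module F V]
    (a : Fin 3 → V) (p q : Fin 3) (hpq : p ≠ q) (h : LinearIndependent F ![a p, a q]) :
    LinearIndependent F ![a 0, a 1] ∨ LinearIndependent F ![a 0, a 2] ∨
      LinearIndependent F ![a 1, a 2] := by
  fin_cases p <;> fin_cases q
  · exact absurd rfl hpq
  · exact Or.inl h
  · exact Or.inr (Or.inl h)
  · exact Or.inl (pair_swap_li h)
  · exact absurd rfl hpq
  · exact Or.inr (Or.inr h)
  · exact Or.inr (Or.inl (pair_swap_li h))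
  · exact Or.inr (Or.inr (pair_swap_li h))
  · exact absurd rfl hpq

theorem stmt13 {F : Type*} [Field F] [Fintype F] {n k : ℕ}
    (C : Submodule F (Fin n → F))
    (g : Fin k → (Fin n → F)) (hg : LinearIndependent F g)
    (hgC : Submodule.span F (Set.range g) = C)
    (z : Fin 3 → (Fin n → F)) (hz : ∀ i, z i ∈ C)
    (hdim : 2 ≤ Module.finrank F ↥(Submodule.span F (Set.range z))) :
    Module.finrank F ↥(Submodule.span F {w | ∃ i j, w = z i * g j}) ≤ 3 * k - 3 := by
  classical
  -- coordinates of z i in terms of g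
  have hcoord : ∀ i, ∃ c : Fin k → F, ∑ j, c j • g j = z i := by
    intro i
    have hzi : z i ∈ Submodule.span F (Set.range g) := by rw [hgC]; exact hz i
    exact (Submodule.mem_span_range_iff_exists_fun F).mp hzi
  choose a ha using hcoord
  -- the linear combination map
  set u : Fin 3 × Fin k → (Fin n → F) := fun p => z p.1 * g p.2 with hu
  set φ : (Fin 3 × Fin k → F) →ₗ[F] (Fin n → F) := Fintype.linearCombination F u with hφ
  -- key computation
  have key : ∀ p q : Fin 3, ∑ j, a q j • (z p * g j) = z p * z q := by
    intro p q
    calc ∑ j, a q j • (z p * g j) = ∑ j, z p * (a q j • g j) := by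
          refine Finset.sum_congr rfl fun j _ => ?_
          rw [mul_smul_comm]
      _ = z p * ∑ j, a q j • g j := by rw [Finset.mul_sum]
      _ = z p * z q := by rw [ha q]
  -- kernel vectors
  set W : Fin 3 → Fin 3 → (Fin 3 × Fin k → F) := fun p q x =>
    (if x.1 = p then a q x.2 else 0) - (if x.1 = q then a p x.2 else 0) with hW
  have hker : ∀ p q : Fin 3, φ (W p q) = 0 := by
    intro p q
    rw [hφ, Fintype.linearCombination_apply, Fintype.sum_prod_type]
    have step : ∀ i : Fin 3, ∑ j, W p q (i, j) • u (i, j)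
        = (if i = p then ∑ j, a q j • (z p * g j) else 0)
          - (if i = q then ∑ j, a p j • (z q * g j) else 0) := by
      intro i
      have e : ∀ j, W p q (i, j) • u (i, j) =
          (if i = p then a q j • (z p * g j) else 0)
            - (if i = q then a p j • (z q * g j) else 0) := by
        intro j
        simp only [hW, hu, sub_smul, ite_smul, zero_smul]
        congr 1 <;> split_ifs with h <;> simp [h]
      rw [Finset.sum_congr rfl fun j _ => e j, Finset.sum_sub_distrib]
      congr 1 <;> split_ifs <;> simp
    rw [Finset.sum_congr rfl fun i _ => step i]
    rw [Finset.sum_sub_distrib, Finset.sum_ite_eq' Finset.univ p,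
      Finset.sum_ite_eq' Finset.univ q]
    simp only [Finset.mem_univ, ite_true]
    rw [key p q, key q p, mul_comm (z p) (z q), sub_self]
  -- there is an independent pair among the z's
  obtain ⟨p, q, hpq, hzind⟩ : ∃ p q : Fin 3, p ≠ q ∧ LinearIndependent F ![z p, z q] := by
    obtain ⟨b, hbsub, hbspan, hbind⟩ := exists_linearIndependent F (Set.range z)
    have hb2 : b.Nontrivial := by
      rw [← Set.not_subsingleton_iff]
      intro hss
      rcases hss.eq_empty_or_singleton with h1 | ⟨x, h1⟩
      · rw [h1] at hbspan
        simp only [Submodule.span_empty] at hbspan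
        rw [← hbspan] at hdim
        rw [finrank_bot F (Fin n → F)] at hdim
        omega
      · rw [h1] at hbspan
        rw [← hbspan] at hdim
        have hle : Module.finrank F ↥(Submodule.span F ({x} : Set (Fin n → F))) ≤ 1 := by
          by_cases hx : x = 0
          · subst hx
            rw [Submodule.span_zero_singleton, finrank_bot F (Fin n → F)]
            omega
          · rw [finrank_span_singleton hx]
        omega
    obtain ⟨x, hx, y, hy, hxy⟩ := hb2
    have hxyind : LinearIndependent F ![x, y] := by
      have hinj : Function.Injective (![⟨x, hx⟩, ⟨y, hy⟩] : Fin 2 → b) := by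
        intro m m' hmm
        fin_cases m <;> fin_cases m' <;>
          simp only [Matrix.cons_val_zero, Matrix.cons_val_one, Matrix.head_cons] at hmm ⊢ <;>
          first
            | rfl
            | exact absurd (congrArg Subtype.val hmm) hxy
            | exact absurd (congrArg Subtype.val hmm) (Ne.symm hxy)
      have h2 := hbind.comp (![⟨x, hx⟩, ⟨y, hy⟩] : Fin 2 → b) hinj
      have heq : (Subtype.val ∘ (![⟨x, hx⟩, ⟨y, hy⟩] : Fin 2 → b)) = ![x, y] := by
        funext m; fin_cases m <;> simp
      rwa [heq] at h2
    obtain ⟨p, hp⟩ := hbsub hx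
    obtain ⟨q, hq⟩ := hbsub hy
    refine ⟨p, q, ?_, by rwa [hp, hq]⟩
    rintro rfl
    exact hxy (hp ▸ hq)
  -- independence of the coordinate vectors
  have haind : LinearIndependent F ![a p, a q] := by
    rw [LinearIndependent.pair_iff]
    intro s t hst
    have hsum : s • z p + t • z q = ∑ j, (s • a p + t • a q) j • g j := by
      rw [← ha p, ← ha q, Finset.smul_sum, Finset.smul_sum, ← Finset.sum_add_distrib]
      refine Finset.sum_congr rfl fun j _ => ?_
      simp [add_smul, smul_smul]
    rw [hst] at hsum
    simp only [Pi.zero_apply, zero_smul, Finset.sum_const_zero] at hsum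
    exact (LinearIndependent.pair_iff.mp hzind) s t hsum
  -- the three kernel vectors
  set v : Fin 3 → (Fin 3 × Fin k → F) := ![W 0 1, W 0 2, W 1 2] with hv
  have hkermem : ∀ m : Fin 3, v m ∈ LinearMap.ker φ := by
    intro m
    fin_cases m <;> simp only [hv, Matrix.cons_val_zero, Matrix.cons_val_one,
      Matrix.head_cons] <;> exact LinearMap.mem_ker.mpr (hker _ _)
  have hvind : LinearIndependent F v := by
    rw [Fintype.linearIndependent_iff]
    intro lam hlam
    have R0 : lam 0 • a 1 + lam 1 • a 2 = 0 := by
      funext j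
      have h := congrFun hlam ((0 : Fin 3), j)
      simp [hv, hW, Fin.sum_univ_three] at h
      simpa using h
    have R1 : (-(lam 0)) • a 0 + lam 2 • a 2 = 0 := by
      funext j
      have h := congrFun hlam ((1 : Fin 3), j)
      simp [hv, hW, Fin.sum_univ_three] at h
      simpa [neg_mul, neg_add_eq_zero, eq_comm, sub_eq_iff_eq_add] using h
    have R2 : (-(lam 1)) • a 0 + (-(lam 2)) • a 1 = 0 := by
      funext j
      have h := congrFun hlam ((2 : Fin 3), j)
      simp [hv, hW, Fin.sum_univ_three] at h
      simpa [neg_mul, neg_add_eq_zero, eq_comm, sub_eq_iff_eq_add] using h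
    have hcases := cases3_li a p q hpq haind
    have hall : lam 0 = 0 ∧ lam 1 = 0 ∧ lam 2 = 0 := by
      rcases hcases with I | I | I
      · obtain ⟨h1, h2⟩ := LinearIndependent.pair_iff.mp I _ _ R2
        rw [neg_eq_zero] at h1 h2
        rw [h1, zero_smul, add_zero] at R0
        have hne : a 1 ≠ 0 := by simpa using I.ne_zero 1
        rcases smul_eq_zero.mp R0 with h0 | h0
        · exact ⟨h0, h1, h2⟩
        · exact absurd h0 hne
      · obtain ⟨h0, h2⟩ := LinearIndependent.pair_iff.mp I _ _ R1
        rw [neg_eq_zero] at h0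
        rw [h0, zero_smul, zero_add] at R0
        have hne : a 2 ≠ 0 := by simpa using I.ne_zero 1
        rcases smul_eq_zero.mp R0 with h1 | h1
        · exact ⟨h0, h1, h2⟩
        · exact absurd h1 hne
      · obtain ⟨h0, h1⟩ := LinearIndependent.pair_iff.mp I _ _ R0
        rw [h0, neg_zero, zero_smul, zero_add] at R1
        have hne : a 2 ≠ 0 := by simpa using I.ne_zero 1
        rcases smul_eq_zero.mp R1 with h2 | h2
        · exact ⟨h0, h1, h2⟩
        · exact absurd h2 hne
    intro m
    fin_cases m
    · exact hall.1
    · exact hall.2.1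
    · exact hall.2.2
  -- lift to kernel
  set v' : Fin 3 → ↥(LinearMap.ker φ) := fun m => ⟨v m, hkermem m⟩ with hv'
  have hv'ind : LinearIndependent F v' :=
    LinearIndependent.of_comp ((LinearMap.ker φ).subtype) hvind
  have hker3 : 3 ≤ Module.finrank F ↥(LinearMap.ker φ) := by
    simpa using hv'ind.fintype_card_le_finrank
  -- the span equals the range of φ
  have hrange : Submodule.span F {w | ∃ i j, w = z i * g j} = LinearMap.range φ := by
    rw [hφ, Fintype.range_linearCombination]
    congr 1
    ext w
    constructor
    · rintro ⟨i, j, rfl⟩; exact ⟨(i, j), rfl⟩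
    · rintro ⟨⟨i, j⟩, rfl⟩; exact ⟨i, j, rfl⟩
  have hsum : Module.finrank F ↥(LinearMap.range φ) + Module.finrank F ↥(LinearMap.ker φ)
      = Module.finrank F (Fin 3 × Fin k → F) := LinearMap.finrank_range_add_finrank_ker φ
  have hdom : Module.finrank F (Fin 3 × Fin k → F) = 3 * k := by
    rw [Module.finrank_fintype_fun_eq_card]
    simp
  rw [hrange]
  omega
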